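/- Let (X,Σ,μ) be a probability space, 0<r<1, and T the Koopman operator of a measure preserving transformation. If f ∈ L^r(μ) satisfies ∫|M_n f|^r dμ → 0, then f lies in the closure of (I-T)L^r(μ) in the metric d(u,v)=∫|u-v|^r dμ. -/

import Mathlib

open MeasureTheory Filter Topology ENNReal

lemma abs_add_rpow_le {r : ℝ} (hr0 : 0 < r) (hr1 : r ≤ 1) (a b : ℝ) :
    |a + b| ^ r ≤ |a| ^ r + |b| ^ r := by
  have h1 : |a + b| ^ r ≤ (|a| + |b|) ^ r :=
    Real.rpow_le_rpow (abs_nonneg _) (abs_add_le a b) hr0.le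
  refine h1.trans ?_
  have h := NNReal.rpow_add_le_add_rpow |a|.toNNReal |b|.toNNReal hr0.le hr1
  have h' := NNReal.coe_le_coe.2 h
  simpa [NNReal.coe_rpow, Real.toNNReal_add (abs_nonneg a) (abs_nonneg b),
    Real.coe_toNNReal _ (abs_nonneg a), Real.coe_toNNReal _ (abs_nonneg b)] using h'

lemma abs_sum_rpow_le {r : ℝ} (hr0 : 0 < r) (hr1 : r ≤ 1) {ι : Type*} (s : Finset ι)
    (a : ι → ℝ) : |∑ i ∈ s, a i| ^ r ≤ ∑ i ∈ s, |a i| ^ r := by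
  classical
  induction s using Finset.induction_on with
  | empty => simp [Real.zero_rpow hr0.ne']
  | insert _ _ hx ih =>
    rename_i i s
    rw [Finset.sum_insert hx, Finset.sum_insert hx]
    exact (abs_add_rpow_le hr0 hr1 _ _).trans (by linarith)

/-- If `f ∈ L^r(μ)`, `0 < r < 1`, and `∫ |M_n f|^r dμ → 0`, then `f` lies in
the closure of `(I - T) L^r(μ)` in the metric `d(u,v) = ∫ |u - v|^r dμ`. -/
theorem stmt2 {X : Type*} [MeasurableSpace X] (μ : Measure X) [IsProbabilityMeasure μ]
    (θ : X → X) (hθ : MeasurePreserving θ μ μ) (r : ℝ) (hr0 : 0 < r) (hr1 : r < 1)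
    (f : X → ℝ) (hf : Measurable f)
    (hfLr : ∫⁻ x, ENNReal.ofReal (|f x| ^ r) ∂μ < ⊤)
    (hconv : Tendsto (fun n : ℕ =>
        ∫⁻ x, ENNReal.ofReal
          (|(1 / (n : ℝ)) * ∑ k ∈ Finset.range n, f (θ^[k] x)| ^ r) ∂μ)
      atTop (𝓝 0)) :
    ∀ ε : ℝ≥0∞, 0 < ε → ∃ g : X → ℝ, Measurable g ∧
      (∫⁻ x, ENNReal.ofReal (|g x| ^ r) ∂μ < ⊤) ∧
      ∫⁻ x, ENNReal.ofReal (|f x - (g x - g (θ x))| ^ r) ∂μ < ε := by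
  intro ε hε
  obtain ⟨n, hnlt, hn1⟩ :=
    (((hconv.eventually_lt_const hε)).and (eventually_ge_atTop 1)).exists
  have hne : (n : ℝ) ≠ 0 := Nat.cast_ne_zero.2 (by omega)
  set g : X → ℝ := fun x => (1 / (n : ℝ)) * ∑ k ∈ Finset.range n,
    ∑ j ∈ Finset.range k, f (θ^[j] x) with hg
  have hmeas : ∀ j : ℕ, Measurable fun x => f (θ^[j] x) :=
    fun j => hf.comp (hθ.measurable.iterate j)
  have hmeas2 : ∀ j : ℕ, Measurable fun x => ENNReal.ofReal (|f (θ^[j] x)| ^ r) := fun j =>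
    ((Real.continuous_rpow_const hr0.le).measurable.comp (hmeas j).abs).ennreal_ofReal
  have hfm : Measurable fun x => ENNReal.ofReal (|f x| ^ r) :=
    ((Real.continuous_rpow_const hr0.le).measurable.comp hf.abs).ennreal_ofReal
  have hgmeas : Measurable g := by
    apply Measurable.const_mul
    exact Finset.measurable_sum _ fun k _ => Finset.measurable_sum _ fun j _ => hmeas j
  refine ⟨g, hgmeas, ?_, ?_⟩
  · -- finiteness of ∫ |g|^r
    have hb : ∀ x, ENNReal.ofReal (|g x| ^ r) ≤
        ∑ k ∈ Finset.range n, ∑ j ∈ Finset.range k,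
          ENNReal.ofReal (|f (θ^[j] x)| ^ r) := by
      intro x
      have h0 : |g x| ≤ |∑ k ∈ Finset.range n, ∑ j ∈ Finset.range k, f (θ^[j] x)| := by
        rw [hg]
        simp only
        rw [abs_mul]
        have : |1 / (n : ℝ)| ≤ 1 := by
          rw [abs_of_nonneg (by positivity)]
          rw [div_le_one (by positivity)]
          exact_mod_cast hn1
        nlinarith [abs_nonneg (∑ k ∈ Finset.range n, ∑ j ∈ Finset.range k, f (θ^[j] x))]
      have h1 : |g x| ^ r ≤ ∑ k ∈ Finset.range n, ∑ j ∈ Finset.range k, |f (θ^[j] x)| ^ r := by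
        refine (Real.rpow_le_rpow (abs_nonneg _) h0 hr0.le).trans ?_
        refine (abs_sum_rpow_le hr0 hr1.le _ _).trans ?_
        exact Finset.sum_le_sum fun k _ => abs_sum_rpow_le hr0 hr1.le _ _
      calc ENNReal.ofReal (|g x| ^ r)
          ≤ ENNReal.ofReal (∑ k ∈ Finset.range n, ∑ j ∈ Finset.range k, |f (θ^[j] x)| ^ r) :=
            ENNReal.ofReal_le_ofReal h1
        _ = ∑ k ∈ Finset.range n, ∑ j ∈ Finset.range k,
              ENNReal.ofReal (|f (θ^[j] x)| ^ r) := by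
            rw [ENNReal.ofReal_sum_of_nonneg fun k _ =>
              Finset.sum_nonneg fun j _ => Real.rpow_nonneg (abs_nonneg _) r]
            exact Finset.sum_congr rfl fun k _ =>
              ENNReal.ofReal_sum_of_nonneg fun j _ => Real.rpow_nonneg (abs_nonneg _) r
    calc ∫⁻ x, ENNReal.ofReal (|g x| ^ r) ∂μ
        ≤ ∫⁻ x, ∑ k ∈ Finset.range n, ∑ j ∈ Finset.range k,
            ENNReal.ofReal (|f (θ^[j] x)| ^ r) ∂μ := lintegral_mono hb
      _ = ∑ k ∈ Finset.range n, ∑ j ∈ Finset.range k,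
            ∫⁻ x, ENNReal.ofReal (|f (θ^[j] x)| ^ r) ∂μ := by
          rw [lintegral_finset_sum _ fun k _ => Finset.measurable_sum _ fun j _ => hmeas2 j]
          exact Finset.sum_congr rfl fun k _ => lintegral_finset_sum _ fun j _ => hmeas2 j
      _ = ∑ k ∈ Finset.range n, ∑ j ∈ Finset.range k,
            ∫⁻ x, ENNReal.ofReal (|f x| ^ r) ∂μ := by
          refine Finset.sum_congr rfl fun k _ => Finset.sum_congr rfl fun j _ => ?_
          exact (hθ.iterate j).lintegral_comp hfm
      _ < ⊤ := by
          refine ENNReal.sum_lt_top.2 fun k _ => ENNReal.sum_lt_top.2 fun j _ => hfLr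
  · -- the approximation
    have hid : ∀ x, f x - (g x - g (θ x)) =
        (1 / (n : ℝ)) * ∑ k ∈ Finset.range n, f (θ^[k] x) := by
      intro x
      have h1 : g x - g (θ x) =
          (1 / (n : ℝ)) * ∑ k ∈ Finset.range n, (f x - f (θ^[k] x)) := by
        rw [hg]
        simp only
        rw [← mul_sub, ← Finset.sum_sub_distrib]
        congr 1
        refine Finset.sum_congr rfl fun k _ => ?_
        calc (∑ j ∈ Finset.range k, f (θ^[j] x)) - ∑ j ∈ Finset.range k, f (θ^[j] (θ x))
            = ∑ j ∈ Finset.range k, (f (θ^[j] x) - f (θ^[j + 1] x)) := by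
              rw [← Finset.sum_sub_distrib]
              exact Finset.sum_congr rfl fun j _ => by
                rw [← Function.iterate_succ_apply]
          _ = f (θ^[0] x) - f (θ^[k] x) := Finset.sum_range_sub' (fun j => f (θ^[j] x)) k
          _ = f x - f (θ^[k] x) := by simp
      rw [h1, Finset.sum_sub_distrib, Finset.sum_const, Finset.card_range, nsmul_eq_mul]
      field_simp
      ring
    have : (fun x => ENNReal.ofReal (|f x - (g x - g (θ x))| ^ r)) =
        fun x => ENNReal.ofReal (|(1 / (n : ℝ)) * ∑ k ∈ Finset.range n, f (θ^[k] x)| ^ r) := by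
      funext x; rw [hid]
    rw [this]
    exact hnlt
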